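/- Let 0 < k < 1, μ = (1−k)²/(4k), and ρ(θ) = √μ·√(μ+cos²θ)/(μ+sin²θ). For θ* ∈ (0, π/2), the quantity −2ρ″(θ*)/ρ(θ*) + 4(ρ′(θ*)/ρ(θ*))² + 2 cot θ* · ρ′(θ*)/ρ(θ*) equals (2(3μ+2) sin²θ* / ((μ + sin²θ*)(μ + cos²θ*)²)) · (−sin²θ* + g(μ)), where g(μ) = (2 + 2μ − 3μ²)/(3μ + 2). -/

import Mathlib

set_option maxHeartbeats 1000000

open Real

theorem aux_d1 (μ : ℝ) (hμ : 0 < μ) (t : ℝ) :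
    HasDerivAt (fun θ => Real.sqrt μ * Real.sqrt (μ + Real.cos θ^2) / (μ + Real.sin θ^2))
      ((Real.sqrt μ * Real.sqrt (μ + Real.cos t^2) / (μ + Real.sin t^2)) *
        (-(Real.sin t * Real.cos t) * (1/(μ + Real.cos t^2) + 2/(μ + Real.sin t^2)))) t := by
  have hA : 0 < μ + Real.cos t^2 := by positivity
  have hB : 0 < μ + Real.sin t^2 := by positivity
  have hsA : Real.sqrt (μ + Real.cos t^2) ^ 2 = μ + Real.cos t^2 := Real.sq_sqrt hA.le
  have hsA0 : 0 < Real.sqrt (μ + Real.cos t^2) := Real.sqrt_pos.mpr hA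
  have hA' : HasDerivAt (fun θ : ℝ => μ + Real.cos θ^2) ((2:ℕ) * Real.cos t ^ 1 * (-Real.sin t)) t :=
    (HasDerivAt.const_add μ ((Real.hasDerivAt_cos t).pow 2))
  have hB' : HasDerivAt (fun θ : ℝ => μ + Real.sin θ^2) ((2:ℕ) * Real.sin t ^ 1 * (Real.cos t)) t :=
    (HasDerivAt.const_add μ ((Real.hasDerivAt_sin t).pow 2))
  have hS : HasDerivAt (fun θ : ℝ => Real.sqrt μ * Real.sqrt (μ + Real.cos θ^2))
      (Real.sqrt μ * (((2:ℕ) * Real.cos t ^ 1 * (-Real.sin t)) / (2 * Real.sqrt (μ + Real.cos t^2)))) t :=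
    (hA'.sqrt hA.ne').const_mul _
  have := hS.div hB' hB.ne'
  convert this using 1
  · rfl
  · rfl
  · rfl
  set q := Real.sqrt (μ + Real.cos t^2) with hq
  rw [← hsA]
  field_simp
  ring

theorem aux_dL (μ : ℝ) (hμ : 0 < μ) (t : ℝ) :
    HasDerivAt (fun θ => -(Real.sin θ * Real.cos θ) * (1/(μ + Real.cos θ^2) + 2/(μ + Real.sin θ^2)))
      (-(Real.cos t^2 - Real.sin t^2) * (1/(μ + Real.cos t^2) + 2/(μ + Real.sin t^2))
        - (Real.sin t * Real.cos t) * (2*Real.sin t*Real.cos t/(μ + Real.cos t^2)^2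
            - 4*Real.sin t*Real.cos t/(μ + Real.sin t^2)^2)) t := by
  have hA : 0 < μ + Real.cos t^2 := by positivity
  have hB : 0 < μ + Real.sin t^2 := by positivity
  have hA' : HasDerivAt (fun θ : ℝ => μ + Real.cos θ^2) ((2:ℕ) * Real.cos t ^ 1 * (-Real.sin t)) t :=
    (HasDerivAt.const_add μ ((Real.hasDerivAt_cos t).pow 2))
  have hB' : HasDerivAt (fun θ : ℝ => μ + Real.sin θ^2) ((2:ℕ) * Real.sin t ^ 1 * (Real.cos t)) t :=
    (HasDerivAt.const_add μ ((Real.hasDerivAt_sin t).pow 2))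
  have h1 : HasDerivAt (fun θ : ℝ => -(Real.sin θ * Real.cos θ))
      (-((Real.cos t) * Real.cos t + Real.sin t * (-Real.sin t))) t :=
    ((Real.hasDerivAt_sin t).mul (Real.hasDerivAt_cos t)).neg
  have h2 : HasDerivAt (fun θ : ℝ => 1/(μ + Real.cos θ^2) + 2/(μ + Real.sin θ^2))
      ((0 * (μ + Real.cos t^2) - 1 * ((2:ℕ) * Real.cos t ^ 1 * (-Real.sin t)))/(μ + Real.cos t^2)^2
        + (0 * (μ + Real.sin t^2) - 2 * ((2:ℕ) * Real.sin t ^ 1 * (Real.cos t)))/(μ + Real.sin t^2)^2) t :=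
    ((hasDerivAt_const t (1:ℝ)).div hA' hA.ne').add ((hasDerivAt_const t (2:ℝ)).div hB' hB.ne')
  have := h1.mul h2
  convert this using 1
  · rfl
  · rfl
  · rfl
  field_simp
  ring

theorem stmt_19 (k : ℝ) (hk0 : 0 < k) (hk1 : k < 1)
    (μ : ℝ) (hμ : μ = (1 - k)^2 / (4*k))
    (ρ : ℝ → ℝ)
    (hρ : ∀ θ : ℝ, ρ θ = Real.sqrt μ * Real.sqrt (μ + (Real.cos θ)^2) / (μ + (Real.sin θ)^2))
    (g : ℝ) (hg : g = (2 + 2*μ - 3*μ^2) / (3*μ + 2)) :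
    ∀ θ : ℝ, 0 < θ → θ < π/2 →
      -2 * deriv (deriv ρ) θ / ρ θ + 4 * (deriv ρ θ / ρ θ)^2
        + 2 * (Real.cos θ / Real.sin θ) * (deriv ρ θ / ρ θ)
      = (2*(3*μ + 2)*(Real.sin θ)^2 / ((μ + (Real.sin θ)^2)*(μ + (Real.cos θ)^2)^2))
        * (-(Real.sin θ)^2 + g) := by
  have hμ0 : 0 < μ := by
    rw [hμ]
    exact div_pos (pow_pos (by linarith) 2) (by linarith)
  have hρe : ρ = fun θ => Real.sqrt μ * Real.sqrt (μ + Real.cos θ^2) / (μ + Real.sin θ^2) :=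
    funext hρ
  subst hρe
  set F : ℝ → ℝ := fun θ => Real.sqrt μ * Real.sqrt (μ + Real.cos θ^2) / (μ + Real.sin θ^2) with hF
  set L : ℝ → ℝ := fun θ => -(Real.sin θ * Real.cos θ) * (1/(μ + Real.cos θ^2) + 2/(μ + Real.sin θ^2)) with hL
  have hd1 : deriv F = fun t => F t * L t := by
    funext t
    exact (aux_d1 μ hμ0 t).deriv
  intro t ht0 ht1
  have hs0 : 0 < Real.sin t := Real.sin_pos_of_pos_of_lt_pi ht0 (lt_trans ht1 (by linarith [Real.pi_pos]))
  have hc0 : 0 < Real.cos t := Real.cos_pos_of_mem_Ioo ⟨by linarith [Real.pi_pos], ht1⟩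
  have hA : 0 < μ + Real.cos t^2 := by positivity
  have hB : 0 < μ + Real.sin t^2 := by positivity
  have hF0 : 0 < F t := by
    simp only [hF]
    positivity
  have hd2 : deriv (deriv F) t
      = F t * L t * L t + F t * (-(Real.cos t^2 - Real.sin t^2) * (1/(μ + Real.cos t^2) + 2/(μ + Real.sin t^2))
        - (Real.sin t * Real.cos t) * (2*Real.sin t*Real.cos t/(μ + Real.cos t^2)^2
            - 4*Real.sin t*Real.cos t/(μ + Real.sin t^2)^2)) := by
    rw [hd1]
    exact HasDerivAt.deriv (((aux_d1 μ hμ0 t)).mul (aux_dL μ hμ0 t))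
  rw [hd2, hd1]
  set L1 : ℝ := -(Real.cos t^2 - Real.sin t^2) * (1/(μ + Real.cos t^2) + 2/(μ + Real.sin t^2))
        - (Real.sin t * Real.cos t) * (2*Real.sin t*Real.cos t/(μ + Real.cos t^2)^2
            - 4*Real.sin t*Real.cos t/(μ + Real.sin t^2)^2) with hL1
  have e1 : F t * L t / F t = L t := by field_simp
  have e2 : (F t * L t * L t + F t * L1) / F t = L t * L t + L1 := by
    rw [div_eq_iff hF0.ne']; ring
  have goal' : -2 * (F t * L t * L t + F t * L1) / F t
      = -2 * (L t * L t + L1) := by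
    rw [mul_div_assoc, e2]
  rw [goal', e1, hg]
  have hsc : Real.sin t ^2 + Real.cos t ^2 = 1 := Real.sin_sq_add_cos_sq t
  have h32 : (0:ℝ) < 3*μ + 2 := by linarith
  have hc2 : Real.cos t ^ 2 = 1 - Real.sin t ^ 2 := Real.cos_sq' t
  have t1 : 2*(Real.cos t/Real.sin t)*(L t)
      = -2*Real.cos t^2*(1/(μ+Real.cos t^2) + 2/(μ+Real.sin t^2)) := by
    simp only [hL]; field_simp
  have t2 : L t * L t
      = (Real.sin t^2*Real.cos t^2)*(1/(μ+Real.cos t^2)+2/(μ+Real.sin t^2))^2 := by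
    simp only [hL]; ring
  have t3 : (L t)^2
      = (Real.sin t^2*Real.cos t^2)*(1/(μ+Real.cos t^2)+2/(μ+Real.sin t^2))^2 := by
    simp only [hL]; ring
  have t4 : L1 = -(Real.cos t^2 - Real.sin t^2)*(1/(μ+Real.cos t^2)+2/(μ+Real.sin t^2))
      - (2*(Real.sin t^2*Real.cos t^2)/(μ+Real.cos t^2)^2
          - 4*(Real.sin t^2*Real.cos t^2)/(μ+Real.sin t^2)^2) := by
    rw [hL1]; ring
  rw [t4, t2, t1, t3, hc2]
  have hx1 : Real.sin t ^ 2 < 1 := by nlinarith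
  have h1 : (0:ℝ) < μ + (1 - Real.sin t^2) := by nlinarith
  have h2 : (0:ℝ) < μ + Real.sin t^2 := by positivity
  generalize Real.sin t ^ 2 = x at hx1 h1 h2 ⊢
  field_simp
  ring
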